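/- If K/F is a finite extension of fields with involution * of characteristic zero and F is not fixed pointwise by * (F ≠ sym(F)), then K is generated over F by a symmetric element. -/

import Mathlib

/-- An involution on a ring: an additive, anti-multiplicative map of order at most 2. -/
def IsInvolution {R : Type*} [Ring R] (τ : R → R) : Prop :=
  (∀ a b : R, τ (a + b) = τ a + τ b) ∧ (∀ a b : R, τ (a * b) = τ b * τ a) ∧
    (∀ a : R, τ (τ a) = a)

open IntermediateField in
/-- If `K/F` is a finite extension of fields of characteristic zero with involution `τ`,
`F` is τ-invariant, and `F` is not fixed pointwise by `τ`, then `K` is generated over `F`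
by a symmetric element. -/
theorem stmt_2 (F K : Type*) [Field F] [Field K] [Algebra F K]
    [FiniteDimensional F K] [CharZero K]
    (τ : K → K) (hτ : IsInvolution τ)
    (hF : ∀ a : F, τ (algebraMap F K a) ∈ (algebraMap F K).range)
    (hne : ∃ a : F, τ (algebraMap F K a) ≠ algebraMap F K a) :
    ∃ θ : K, τ θ = θ ∧ Algebra.adjoin F {θ} = ⊤ := by
  obtain ⟨hadd, hmul, hinv⟩ := hτ
  have h0 : τ 0 = 0 := by
    have h := hadd 0 0
    rw [add_zero] at h
    exact (left_eq_add.mp h)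
  have h1 : τ 1 = 1 := by
    have hne1 : τ 1 ≠ 0 := by
      intro h
      have : (1 : K) = 0 := by rw [← hinv 1, h, h0]
      exact one_ne_zero this
    have h := hmul 1 1
    rw [mul_one] at h
    field_simp at h
    exact h.symm
  have hnat : ∀ n : ℕ, τ (n : K) = n := by
    intro n
    induction n with
    | zero => simpa using h0
    | succ n ih => push_cast; rw [hadd, ih, h1]
  -- basic data
  obtain ⟨a, ha⟩ := hne
  obtain ⟨b, hb⟩ := hF a
  haveI : CharZero F := (algebraMap F K).charZero
  haveI : Algebra.IsSeparable F K := inferInstance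
  obtain ⟨α, hα⟩ := Field.exists_primitive_element F K
  set aK := algebraMap F K a with haK
  set bK := algebraMap F K b with hbK
  set β := τ α with hβ
  set s₁ := α + β with hs₁
  set s₃ := aK * α + bK * β with hs₃
  have hτs₁ : τ s₁ = s₁ := by
    rw [hs₁, hadd, hinv, add_comm]
  have hτaK : τ aK = bK := hb.symm
  have hτbK : τ bK = aK := by rw [hb]; exact hinv aK
  have hτs₃ : τ s₃ = s₃ := by
    rw [hs₃, hadd, hmul, hmul, hτaK, hτbK, hinv]
    ring
  have hab : aK - bK ≠ 0 := by
    rw [sub_ne_zero]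
    intro h
    exact ha (hτaK.trans h.symm)
  -- finitely many intermediate fields
  haveI : Finite (IntermediateField F K) :=
    Field.finite_intermediateField_of_exists_primitive_element F K ⟨α, hα⟩
  obtain ⟨m, n, hmn, heq⟩ :=
    Finite.exists_ne_map_eq_of_infinite (fun n : ℕ => F⟮s₃ + (n : K) * s₁⟯)
  set L := F⟮s₃ + (n : K) * s₁⟯ with hL
  have hx : s₃ + (m : K) * s₁ ∈ L := by
    have h := IntermediateField.mem_adjoin_simple_self F (s₃ + (m : K) * s₁)
    rwa [heq] at h
  have hy : s₃ + (n : K) * s₁ ∈ L := IntermediateField.mem_adjoin_simple_self F _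
  have hcmem : ((m : K) - n) ∈ L := sub_mem (IntermediateField.natCast_mem L m) (IntermediateField.natCast_mem L n)
  have hcne : ((m : K) - (n : K)) ≠ 0 := by
    rw [sub_ne_zero]
    exact_mod_cast fun h => hmn (Nat.cast_injective h)
  have hs₁L : s₁ ∈ L := by
    have : s₁ = ((m : K) - n)⁻¹ * ((s₃ + (m : K) * s₁) - (s₃ + (n : K) * s₁)) := by
      field_simp
      ring
    rw [this]
    exact mul_mem (inv_mem hcmem) (sub_mem hx hy)
  have hs₃L : s₃ ∈ L := by
    have : s₃ = (s₃ + (n : K) * s₁) - (n : K) * s₁ := by ring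
    rw [this]
    exact sub_mem hy (mul_mem (IntermediateField.natCast_mem L n) hs₁L)
  have hαL : α ∈ L := by
    have key : s₃ - bK * s₁ = (aK - bK) * α := by rw [hs₃, hs₁]; ring
    have : α = (aK - bK)⁻¹ * (s₃ - bK * s₁) := by
      rw [key, inv_mul_cancel_left₀ hab]
    rw [this]
    have haKm : aK ∈ L := L.algebraMap_mem a
    have hbKm : bK ∈ L := L.algebraMap_mem b
    exact mul_mem (inv_mem (sub_mem haKm hbKm)) (sub_mem hs₃L (mul_mem hbKm hs₁L))
  have hLtop : L = ⊤ := by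
    have : F⟮α⟯ ≤ L := IntermediateField.adjoin_simple_le_iff.mpr hαL
    rw [hα] at this
    exact top_unique this
  refine ⟨s₃ + (n : K) * s₁, ?_, ?_⟩
  · rw [hadd, hτs₃, hmul, hτs₁, hnat, mul_comm]
  · have hint : IsIntegral F (s₃ + (n : K) * s₁) := IsIntegral.of_finite F _
    have := IntermediateField.adjoin_simple_toSubalgebra_of_isAlgebraic hint.isAlgebraic
    rw [← this, ← hL, hLtop]
    exact IntermediateField.top_toSubalgebra
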